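/- Let Γ = Γ((n_i),(m_i)) be a generalised Baumslag–Solitar group over a cycle of length s, and suppose p is a prime with 1 ≤ ν_p(m(Ξ)) < ν_p(n(Ξ)), where n(Ξ) and m(Ξ) are the augmentation products. Then: (i) there exist an index i ∈ {1,…,s}, a finite group Q and a homomorphism φ : Γ → Q such that p divides the order of φ(a_i); and (ii) for every index j ∈ {1,…,s}, every finite group Q and every homomorphism φ : Γ → Q, the p-adic valuation of the order of φ(a_j) is strictly less than ν_p(n(Ξ)). (Hence some vertex-group closure in the profinite completion of Γ has nontrivial finite p-primary part; in particular, if the profinite completion of Γ is torsion-free then n(Ξ) and m(Ξ) are isocratic.) -/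

import Mathlib

/-- The relators of a generalised Baumslag–Solitar group over a cycle of length `s`:
generators are `some i` (= `a_{i+1}`) for `i : Fin s` together with the stable letter
`none` (= `t`); the relator indexed by a non-final `i` is `a_i^{n_i} a_{i+1}^{-m_i}`,
and the relator indexed by the final vertex is `t a_s^{n_s} t⁻¹ a_1^{-m_s}`. -/
def cycleRel (s : ℕ) (n m : Fin s → ℤ) (i : Fin s) : FreeGroup (Option (Fin s)) :=
  if h : (i : ℕ) + 1 < s then
    FreeGroup.of (some i) ^ (n i) * FreeGroup.of (some ⟨(i : ℕ) + 1, h⟩) ^ (-(m i))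
  else
    FreeGroup.of none * FreeGroup.of (some i) ^ (n i) * (FreeGroup.of none)⁻¹ *
      FreeGroup.of (some ⟨0, i.pos⟩) ^ (-(m i))

/-- The generalised Baumslag–Solitar group over a cycle of length `s`, with presentation
`⟨a_1,…,a_s, t ∣ a_i^{n_i} = a_{i+1}^{m_i} (1 ≤ i ≤ s−1), t a_s^{n_s} t⁻¹ = a_1^{m_s}⟩`. -/
abbrev GBSCycle (s : ℕ) (n m : Fin s → ℤ) := PresentedGroup (Set.range (cycleRel s n m))

/-- The vertex generator `a_i` of the generalised Baumslag–Solitar group over a cycle. -/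
abbrev GBSCycle.a (s : ℕ) (n m : Fin s → ℤ) (i : Fin s) : GBSCycle s n m :=
  PresentedGroup.of (some i)

/-! ### Auxiliary lemmas -/

open Finset in
private lemma fin_val_add_one {s : ℕ} [NeZero s] (x : Fin s) :
    ((x + 1 : Fin s) : ℕ) = (x.val + 1) % s := by
  rw [Fin.val_add, Fin.val_one']
  conv_rhs => rw [Nat.add_mod, Nat.mod_eq_of_lt x.isLt]

private lemma fin_add_one_of_lt {s : ℕ} [NeZero s] {x : Fin s} (h : (x : ℕ) + 1 < s) :
    x + 1 = ⟨(x : ℕ) + 1, h⟩ := by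
  apply Fin.ext
  rw [fin_val_add_one, Nat.mod_eq_of_lt h]

private lemma fin_add_one_of_eq {s : ℕ} [NeZero s] {x : Fin s} (h : (x : ℕ) + 1 = s) :
    x + 1 = 0 := by
  apply Fin.ext
  rw [fin_val_add_one, h, Nat.mod_self, Fin.val_zero]

private lemma orderOf_conj_eq {Q : Type*} [Group Q] (g x : Q) :
    orderOf (g * x * g⁻¹) = orderOf x := by
  have : g * x * g⁻¹ = (MulAut.conj g) x := rfl
  rw [this, MulEquiv.orderOf_eq]

private lemma padic_div_gcd (p : ℕ) (hp : p.Prime) (d e : ℕ) (hd : d ≠ 0) (he : e ≠ 0) :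
    padicValNat p (d / Nat.gcd d e) = padicValNat p d - padicValNat p e := by
  have hg : Nat.gcd d e ∣ d := Nat.gcd_dvd_left d e
  have h1 : (d / Nat.gcd d e).factorization p
      = d.factorization p - (Nat.gcd d e).factorization p := by
    rw [Nat.factorization_div hg, Finsupp.tsub_apply]
  have h2 : (Nat.gcd d e).factorization p
      = min (d.factorization p) (e.factorization p) := by
    rw [Nat.factorization_gcd hd he, Finsupp.inf_apply]
  have h3 := Nat.factorization_def d hp
  have h4 := Nat.factorization_def e hp
  have h5 := Nat.factorization_def (d / Nat.gcd d e) hp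
  omega

private lemma padic_orderOf_zpow {Q : Type*} [Group Q] [Finite Q] (p : ℕ) (hp : p.Prime)
    (x : Q) (c : ℤ) (hc : c ≠ 0) :
    padicValNat p (orderOf (x ^ c)) =
      padicValNat p (orderOf x) - padicValNat p c.natAbs := by
  have hd : orderOf x ≠ 0 := (orderOf_pos x).ne'
  have he : c.natAbs ≠ 0 := Int.natAbs_ne_zero.mpr hc
  have hxc : orderOf (x ^ c) = orderOf (x ^ (c.natAbs : ℕ)) := by
    rcases Int.natAbs_eq c with h | h
    · conv_lhs => rw [h]
      rw [zpow_natCast]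
    · conv_lhs => rw [h]
      rw [zpow_neg, orderOf_inv, zpow_natCast]
  rw [hxc, orderOf_pow x, padic_div_gcd p hp _ _ hd he]

open Finset in
private lemma padic_val_int_prod (p : ℕ) (hp : p.Prime) {ι : Type*} (t : Finset ι)
    (f : ι → ℤ) (hf : ∀ i ∈ t, f i ≠ 0) :
    padicValNat p (∏ i ∈ t, f i).natAbs = ∑ i ∈ t, padicValNat p (f i).natAbs := by
  have h1 : (∏ i ∈ t, f i).natAbs = ∏ i ∈ t, (f i).natAbs := map_prod Int.natAbsHom f t
  have h2 : ∀ i ∈ t, (f i).natAbs ≠ 0 := fun i hi => Int.natAbs_ne_zero.mpr (hf i hi)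
  calc padicValNat p (∏ i ∈ t, f i).natAbs
      = (∏ i ∈ t, (f i).natAbs).factorization p := by
        rw [h1, Nat.factorization_def _ hp]
    _ = (∑ i ∈ t, ((f i).natAbs).factorization) p := by rw [Nat.factorization_prod h2]
    _ = ∑ i ∈ t, ((f i).natAbs).factorization p := Finsupp.finset_sum_apply t _ p
    _ = ∑ i ∈ t, padicValNat p (f i).natAbs := by
        exact Finset.sum_congr rfl fun i _ => Nat.factorization_def _ hp

/-- The defining relations of the GBS cycle group, up to conjugation. -/
private lemma gbs_rel (s : ℕ) [NeZero s] (n m : Fin s → ℤ) (i : Fin s) :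
    ∃ g : GBSCycle s n m, g * (GBSCycle.a s n m i) ^ (n i) * g⁻¹ =
      (GBSCycle.a s n m (i + 1)) ^ (m i) := by
  have h1 : PresentedGroup.mk (Set.range (cycleRel s n m)) (cycleRel s n m i) = 1 :=
    (QuotientGroup.eq_one_iff _).mpr
      (Subgroup.subset_normalClosure (Set.mem_range_self i))
  unfold cycleRel at h1
  by_cases h : (i : ℕ) + 1 < s
  · rw [dif_pos h] at h1
    rw [map_mul, map_zpow, map_zpow] at h1
    refine ⟨1, ?_⟩
    have hsucc : (⟨(i : ℕ) + 1, h⟩ : Fin s) = i + 1 := (fin_add_one_of_lt h).symm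
    rw [hsucc] at h1
    have h2 : (GBSCycle.a s n m i) ^ (n i) *
        ((GBSCycle.a s n m (i + 1)) ^ (m i))⁻¹ = 1 := by
      rw [← zpow_neg]
      exact h1
    rw [one_mul, inv_one, mul_one]
    exact (mul_inv_eq_one.mp h2)
  · rw [dif_neg h] at h1
    rw [map_mul, map_mul, map_mul, map_zpow, map_inv, map_zpow] at h1
    have hi1 : (i : ℕ) + 1 = s := by have := i.isLt; omega
    have hsucc : (⟨0, i.pos⟩ : Fin s) = i + 1 := by
      rw [fin_add_one_of_eq hi1]; rfl
    rw [hsucc] at h1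
    refine ⟨PresentedGroup.mk _ (FreeGroup.of none), ?_⟩
    have h2 : (PresentedGroup.mk (Set.range (cycleRel s n m)) (FreeGroup.of none)) *
        (GBSCycle.a s n m i) ^ (n i) *
        (PresentedGroup.mk (Set.range (cycleRel s n m)) (FreeGroup.of none))⁻¹ *
        ((GBSCycle.a s n m (i + 1)) ^ (m i))⁻¹ = 1 := by
      rw [← zpow_neg]
      exact h1
    exact (mul_inv_eq_one.mp h2)

open Fin.CommRing in
theorem GBSCycle_nonisocratic_torsion
    (s : ℕ) (hs : 0 < s) (n m : Fin s → ℤ)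
    (hn : ∀ i, n i ≠ 0) (hm : ∀ i, m i ≠ 0)
    (p : ℕ) (hp : p.Prime)
    (h1 : 1 ≤ padicValNat p (∏ j, m j).natAbs)
    (h2 : padicValNat p (∏ j, m j).natAbs < padicValNat p (∏ j, n j).natAbs) :
    (∃ (i : Fin s) (Q : Type) (_ : Group Q) (_ : Finite Q) (φ : GBSCycle s n m →* Q),
        p ∣ orderOf (φ (GBSCycle.a s n m i))) ∧
    (∀ (i : Fin s) (Q : Type) (_ : Group Q) (_ : Finite Q) (φ : GBSCycle s n m →* Q),
        padicValNat p (orderOf (φ (GBSCycle.a s n m i))) <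
          padicValNat p (∏ j, n j).natAbs) := by
  haveI : NeZero s := ⟨hs.ne'⟩
  have hMne : (∏ j, m j) ≠ 0 := Finset.prod_ne_zero_iff.mpr fun i _ => hm i
  have hNne : (∏ j, n j) ≠ 0 := Finset.prod_ne_zero_iff.mpr fun i _ => hn i
  have hMabs : (∏ j, m j).natAbs ≠ 0 := Int.natAbs_ne_zero.mpr hMne
  have hNabs : (∏ j, n j).natAbs ≠ 0 := Int.natAbs_ne_zero.mpr hNne
  constructor
  · -- Part (i): construct a finite quotient
    -- pivot index with p ∣ m k
    obtain ⟨k, _, hk⟩ : ∃ k ∈ Finset.univ, p ∣ (m k).natAbs := by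
      have hdvd : p ∣ (∏ j, m j).natAbs := by
        calc p = p ^ 1 := (pow_one p).symm
          _ ∣ p ^ padicValNat p (∏ j, m j).natAbs := pow_dvd_pow p h1
          _ ∣ (∏ j, m j).natAbs := pow_padicValNat_dvd
      rw [show (∏ j, m j).natAbs = ∏ j, (m j).natAbs from map_prod Int.natAbsHom _ _] at hdvd
      exact hp.prime.exists_mem_finset_dvd hdvd
    set L : ℕ := padicValNat p (∏ j, m j).natAbs + 1 with hL
    set K : ℕ := p ^ L with hK
    haveI : NeZero K := ⟨pow_ne_zero _ hp.pos.ne'⟩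
    -- the labelling of the cycle starting after the pivot
    set σ : ℕ → Fin s := fun r => k + 1 + (r : Fin s) with hσ
    set c' : ℕ → ℤ := fun d =>
      (∏ r ∈ Finset.range d, n (σ r)) * (∏ r ∈ Finset.Ico d s, m (σ r)) with hc'
    set c : Fin s → ℤ := fun i => c' ((i - (k + 1)).val) with hc
    -- reindexing products over the cycle
    have reindex : ∀ g : Fin s → ℤ, (∏ r ∈ Finset.range s, g (σ r)) = ∏ i, g i := by
      intro g
      rw [← Fin.prod_univ_eq_prod_range (fun r => g (k + 1 + (r : Fin s))) s]
      calc (∏ i : Fin s, g (k + 1 + ((i : ℕ) : Fin s)))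
          = ∏ i : Fin s, g (k + 1 + i) := by
            exact Finset.prod_congr rfl fun i _ => by rw [Fin.cast_val_eq_self]
        _ = ∏ i, g i := Equiv.prod_comp (Equiv.addLeft (k + 1)) g
    -- σ applied to the distance gives back the index
    have hσd : ∀ i : Fin s, σ ((i - (k + 1)).val) = i := by
      intro i
      show k + 1 + (((i - (k + 1)).val : ℕ) : Fin s) = i
      rw [Fin.cast_val_eq_self, add_sub_cancel]
    -- the exact step identity
    have E1 : ∀ d, d < s → n (σ d) * c' d = m (σ d) * c' (d + 1) := by
      intro d hd
      show n (σ d) * ((∏ r ∈ Finset.range d, n (σ r)) * (∏ r ∈ Finset.Ico d s, m (σ r)))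
        = m (σ d) * ((∏ r ∈ Finset.range (d + 1), n (σ r)) *
            (∏ r ∈ Finset.Ico (d + 1) s, m (σ r)))
      rw [Finset.prod_range_succ, Finset.prod_eq_prod_Ico_succ_bot hd (fun r => m (σ r))]
      ring
    -- value of c at the pivot successor
    have hck1 : c (k + 1) = ∏ j, m j := by
      have : ((k + 1) - (k + 1) : Fin s).val = 0 := by rw [sub_self, Fin.val_zero]
      rw [hc]
      show c' (((k + 1) - (k + 1) : Fin s).val) = _
      rw [this]
      show (∏ r ∈ Finset.range 0, n (σ r)) * (∏ r ∈ Finset.Ico 0 s, m (σ r)) = _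
      rw [Finset.prod_range_zero, one_mul, ← Finset.range_eq_Ico, reindex]
    -- the congruence for all relations
    have R : ∀ i : Fin s, ((n i * c i : ℤ) : ZMod K) = ((m i * c (i + 1) : ℤ) : ZMod K) := by
      intro i
      by_cases hik : i = k
      · subst hik
        -- distance of the pivot is s - 1
        have hdk : ((i - (i + 1) : Fin s)).val = s - 1 := by
          have hsum : (i - (i + 1)) + 1 = 0 := by ring
          have := fin_val_add_one (i - (i + 1))
          rw [hsum, Fin.val_zero] at this
          have hlt := (i - (i + 1)).isLt
          rcases Nat.lt_or_ge ((i - (i + 1)).val + 1) s with h | h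
          · rw [Nat.mod_eq_of_lt h] at this; omega
          · omega
        have hsm1 : s - 1 < s := by omega
        have hE := E1 (s - 1) hsm1
        have hσs : σ (s - 1) = i := by
          have := hσd i
          rw [hdk] at this
          exact this
        rw [hσs] at hE
        have hcs : c' ((s : ℕ) - 1 + 1) = ∏ j, n j := by
          have hs1 : s - 1 + 1 = s := by omega
          rw [hs1]
          show (∏ r ∈ Finset.range s, n (σ r)) * (∏ r ∈ Finset.Ico s s, m (σ r)) = _
          rw [Finset.Ico_self, Finset.prod_empty, mul_one, reindex]
        have hci : c i = c' (s - 1) := by rw [hc]; show c' _ = _; rw [hdk]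
        rw [hci, hE, hcs, hck1]
        -- need : m i * ∏ n ≡ m i * ∏ m  [ZMOD K]
        rw [ZMod.intCast_eq_intCast_iff]
        have hdiv : (K : ℤ) ∣ m i * (∏ j, n j) - m i * (∏ j, m j) := by
          rw [← mul_sub]
          have e1 : (K : ℤ) = (p : ℤ) * (p : ℤ) ^ (padicValNat p (∏ j, m j).natAbs) := by
            rw [hK, hL, pow_succ]
            push_cast
            ring
          rw [e1]
          apply mul_dvd_mul
          · rwa [Int.natCast_dvd]
          · apply dvd_sub
            · have hdl : p ^ padicValNat p (∏ j, m j).natAbs ∣ (∏ j, n j).natAbs :=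
                dvd_trans (pow_dvd_pow p h2.le) pow_padicValNat_dvd
              rw [← Int.natCast_pow] at *
              rwa [Int.natCast_dvd]
            · have hdl : p ^ padicValNat p (∏ j, m j).natAbs ∣ (∏ j, m j).natAbs :=
                pow_padicValNat_dvd
              rw [← Int.natCast_pow] at *
              rwa [Int.natCast_dvd]
        exact (Int.modEq_iff_dvd.mpr hdiv).symm
      · -- exact integer identity
        have hd : (i - (k + 1)).val < s := (i - (k + 1)).isLt
        have hstep : ((i + 1) - (k + 1) : Fin s).val = (i - (k + 1)).val + 1 := by
          have hne : (i - (k + 1)) + 1 ≠ 0 := by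
            intro hzero
            apply hik
            have : i - (k + 1) + 1 + k = 0 + k := by rw [hzero]
            have h' : i - k = 0 := by
              have : i - (k + 1) + 1 = i - k := by ring
              rw [this] at hzero
              exact hzero
            have := sub_eq_zero.mp h'
            exact this
          have hv := fin_val_add_one (i - (k + 1))
          rcases Nat.lt_or_ge ((i - (k + 1)).val + 1) s with h | h
          · have : ((i + 1) - (k + 1) : Fin s) = (i - (k + 1)) + 1 := by ring
            rw [this, hv, Nat.mod_eq_of_lt h]
          · exfalso
            apply hne
            have hle : (i - (k + 1)).val + 1 = s := by
              have := (i - (k + 1)).isLt; omega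
            apply Fin.ext
            rw [hv, hle, Nat.mod_self, Fin.val_zero]
        have hE := E1 ((i - (k + 1)).val) hd
        rw [hσd i] at hE
        have : n i * c i = m i * c (i + 1) := by
          rw [hc]
          show n i * c' ((i - (k + 1)).val) = m i * c' (((i + 1) - (k + 1)).val)
          rw [hstep]
          exact hE
        rw [this]
    -- the homomorphism
    set f : Option (Fin s) → Multiplicative (ZMod K) := fun o =>
      o.elim 1 (fun i => Multiplicative.ofAdd ((c i : ZMod K))) with hf
    have hrels : ∀ r ∈ Set.range (cycleRel s n m), FreeGroup.lift f r = 1 := by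
      rintro r ⟨i, rfl⟩
      have key : ∀ (i' : Fin s), i' = i + 1 →
          (FreeGroup.lift f) (FreeGroup.of (some i) ^ (n i) *
            FreeGroup.of (some i') ^ (-(m i))) = 1 := by
        intro i' hi'
        rw [map_mul, map_zpow, map_zpow, FreeGroup.lift_apply_of, FreeGroup.lift_apply_of]
        show Multiplicative.ofAdd ((c i : ZMod K)) ^ (n i) *
          Multiplicative.ofAdd ((c i' : ZMod K)) ^ (-(m i)) = 1
        rw [← ofAdd_zsmul, ← ofAdd_zsmul, ← ofAdd_add, ← ofAdd_zero]
        congr 1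
        have hsm : ∀ (z : ℤ) (a : ℤ), z • ((a : ZMod K)) = ((z * a : ℤ) : ZMod K) := by
          intro z a
          rw [zsmul_eq_mul]
          push_cast
          ring
        rw [hsm, hsm, hi', ← Int.cast_add]
        have : n i * c i + -m i * c (i + 1) = n i * c i - m i * c (i + 1) := by ring
        rw [this]
        have := R i
        rw [show ((n i * c i - m i * c (i + 1) : ℤ) : ZMod K)
            = ((n i * c i : ℤ) : ZMod K) - ((m i * c (i + 1) : ℤ) : ZMod K) by push_cast; ring]
        rw [this, sub_self]
      unfold cycleRel
      by_cases h : (i : ℕ) + 1 < s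
      · rw [dif_pos h]
        exact key _ (fin_add_one_of_lt h).symm
      · rw [dif_neg h]
        have hi1 : (i : ℕ) + 1 = s := by have := i.isLt; omega
        rw [map_mul, map_mul, map_mul, map_inv]
        have hnone : (FreeGroup.lift f) (FreeGroup.of none) = 1 := by
          rw [FreeGroup.lift_apply_of]
          rfl
        rw [hnone, one_mul, inv_one, mul_one]
        have := key ⟨0, i.pos⟩ (by rw [fin_add_one_of_eq hi1]; rfl)
        rw [map_mul, map_zpow, map_zpow] at this
        rw [map_zpow, map_zpow]
        exact this
    set φ : GBSCycle s n m →* Multiplicative (ZMod K) := PresentedGroup.toGroup hrels with hφ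
    refine ⟨k + 1, Multiplicative (ZMod K), inferInstance, inferInstance, φ, ?_⟩
    have hval : φ (GBSCycle.a s n m (k + 1))
        = Multiplicative.ofAdd ((c (k + 1) : ZMod K)) := by
      rw [hφ]
      exact PresentedGroup.toGroup.of hrels
    rw [hval, hck1]
    -- the element (∏ m : ZMod K) is nonzero, so its order is divisible by p
    have hne : (((∏ j, m j : ℤ)) : ZMod K) ≠ 0 := by
      rw [Ne, ZMod.intCast_zmod_eq_zero_iff_dvd]
      intro hdvd
      rw [Int.natCast_dvd, hK] at hdvd
      have := (Nat.Prime.pow_dvd_iff_le_factorization hp hMabs).mp hdvd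
      rw [Nat.factorization_def _ hp] at this
      omega
    rw [orderOf_ofAdd_eq_addOrderOf]
    have hdvdK : addOrderOf (((∏ j, m j : ℤ)) : ZMod K) ∣ K := by
      have := addOrderOf_dvd_card (x := (((∏ j, m j : ℤ)) : ZMod K))
      rwa [ZMod.card] at this
    obtain ⟨j, hjle, hje⟩ := (Nat.dvd_prime_pow hp).mp hdvdK
    have hj0 : j ≠ 0 := by
      intro h0
      rw [h0, pow_zero] at hje
      exact hne (AddMonoid.addOrderOf_eq_one_iff.mp hje)
    rw [hje]
    exact dvd_pow_self p hj0
  · -- Part (ii): valuation bound in every finite quotient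
    intro j Q _ _ φ
    set kv : Fin s → ℕ := fun i => padicValNat p (orderOf (φ (GBSCycle.a s n m i))) with hkv
    have step : ∀ i : Fin s,
        kv (i + 1) ≤ (kv i - padicValNat p (n i).natAbs) + padicValNat p (m i).natAbs := by
      intro i
      obtain ⟨g, hg⟩ := gbs_rel s n m i
      have him : φ g * (φ (GBSCycle.a s n m i)) ^ (n i) * (φ g)⁻¹
          = (φ (GBSCycle.a s n m (i + 1))) ^ (m i) := by
        rw [← map_zpow, ← map_inv, ← map_mul, ← map_mul, hg, map_zpow]
      have hord : orderOf ((φ (GBSCycle.a s n m i)) ^ (n i))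
          = orderOf ((φ (GBSCycle.a s n m (i + 1))) ^ (m i)) := by
        rw [← him, orderOf_conj_eq]
      have e1 := padic_orderOf_zpow p hp (φ (GBSCycle.a s n m i)) (n i) (hn i)
      have e2 := padic_orderOf_zpow p hp (φ (GBSCycle.a s n m (i + 1))) (m i) (hm i)
      rw [hord, e2] at e1
      simp only [hkv]
      omega
    -- iterate the step around the cycle
    have main : ∀ r : ℕ,
        kv (j + (r : Fin s)) ≤
          (kv j - ∑ t ∈ Finset.range r, padicValNat p (n (j + (t : Fin s))).natAbs)
          + ∑ t ∈ Finset.range r, padicValNat p (m (j + (t : Fin s))).natAbs := by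
      intro r
      induction r with
      | zero => simp
      | succ r ih =>
        have hcast : ((r + 1 : ℕ) : Fin s) = (r : Fin s) + 1 := by push_cast; ring
        have hidx : j + ((r + 1 : ℕ) : Fin s) = (j + (r : Fin s)) + 1 := by
          rw [hcast]; ring
        have hstep := step (j + (r : Fin s))
        rw [Finset.sum_range_succ, Finset.sum_range_succ]
        rw [hidx]
        omega
    have hfin := main s
    rw [Fin.natCast_self, add_zero] at hfin
    -- reindex the sums
    have reindexsum : ∀ g : Fin s → ℕ,
        (∑ t ∈ Finset.range s, g (j + (t : Fin s))) = ∑ i, g i := by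
      intro g
      rw [← Fin.sum_univ_eq_sum_range (fun t => g (j + (t : Fin s))) s]
      calc (∑ i : Fin s, g (j + ((i : ℕ) : Fin s)))
          = ∑ i : Fin s, g (j + i) := by
            exact Finset.sum_congr rfl fun i _ => by rw [Fin.cast_val_eq_self]
        _ = ∑ i, g i := Equiv.sum_comp (Equiv.addLeft j) g
    rw [reindexsum (fun i => padicValNat p (n i).natAbs),
      reindexsum (fun i => padicValNat p (m i).natAbs)] at hfin
    rw [← padic_val_int_prod p hp Finset.univ n (fun i _ => hn i),
      ← padic_val_int_prod p hp Finset.univ m (fun i _ => hm i)] at hfin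
    simp only [hkv] at hfin
    omega
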